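/- Let m ≥ 2, n = 2^{m+1} - 4. Define S'_m to be the set of integers s' with (n+3)/3 ≤ s' ≤ (n+3)/2 whose binary digits (s_{m-1},...,s_1,1) have last digit 1 and satisfy: s_j = 0 implies s_{j+1} = 1 (for 1 ≤ j ≤ m-2). Define S_{m-1} analogously with n' = 2^m - 4 in place of n. Then the map ι(s) = 2s + 1 is a bijection from S_{m-1} onto S'_m. -/

import Mathlib

/-- `S'cond m n s'` : `s'` lies in `S'_m` for the parameter `n`, i.e.
`(n+3)/3 ≤ s' ≤ (n+3)/2`, the last binary digit of `s'` is `1`, and the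
digits satisfy: `s_j = 0` implies `s_{j+1} = 1` for `1 ≤ j ≤ m-2`. -/
def Scond' (m n s' : ℕ) : Prop :=
  n + 3 ≤ 3 * s' ∧ 2 * s' ≤ n + 3 ∧ s'.testBit 0 = true ∧
    ∀ j, 1 ≤ j → j ≤ m - 2 → s'.testBit j = false → s'.testBit (j + 1) = true

/-- `Scond k n s` : `s` lies in `S_k` for the parameter `n`, i.e.
`(n+2)/3 ≤ s ≤ (n+2)/2` and the binary digits of `s` satisfy:
`s_j = 0` implies `s_{j+1} = 1`. -/
def Scond (k n s : ℕ) : Prop :=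
  n + 2 ≤ 3 * s ∧ 2 * s ≤ n + 2 ∧
    ∀ j ≤ k - 2, s.testBit j = false → s.testBit (j + 1) = true

/-- For `m ≥ 2`, `n = 2^(m+1) - 4` and `n' = 2^m - 4`, the map `ι(s) = 2s + 1`
is a bijection from `S_{m-1}` (for `n'`) onto `S'_m` (for `n`). -/

lemma tb (s j : ℕ) : (2 * s + 1).testBit (j + 1) = s.testBit j := by
  rw [Nat.testBit_succ]
  congr 1
  omega

theorem iota_bijective (m : ℕ) (hm : 2 ≤ m) (n n' : ℕ)
    (hn : n = 2 ^ (m + 1) - 4) (hn' : n' = 2 ^ m - 4) :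
    Set.BijOn (fun s => 2 * s + 1)
      {s | Scond (m - 1) n' s} {s' | Scond' m n s'} := by
  have hp : 4 ≤ 2 ^ m := by
    calc (4:ℕ) = 2 ^ 2 := rfl
    _ ≤ 2 ^ m := Nat.pow_le_pow_right (by norm_num) hm
  have hpow : 2 ^ (m + 1) = 2 * 2 ^ m := by ring
  refine ⟨?_, ?_, ?_⟩
  · rintro s ⟨h1, h2, h3⟩
    show Scond' m n (2 * s + 1)
    refine ⟨by omega, by omega, ?_, ?_⟩
    · simp [Nat.testBit_zero]
    · intro j hj1 hj2 hf
      obtain ⟨i, rfl⟩ : ∃ i, j = i + 1 := ⟨j - 1, by omega⟩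
      rw [tb] at hf
      rw [show i + 1 + 1 = (i + 1) + 1 from rfl, tb]
      exact h3 i (by omega) hf
  · intro a _ b _ h
    simp only at h
    omega
  · rintro s' ⟨h1, h2, h3, h4⟩
    have hodd : s' % 2 = 1 := by
      simpa [Nat.testBit_zero] using h3
    have hs' : s' = 2 * (s' / 2) + 1 := by omega
    have c1 : Scond (m - 1) n' (s' / 2) := by
      refine ⟨by omega, by omega, ?_⟩
      intro j hj hf
      rw [← tb, ← hs'] at hf
      rw [← tb (s' / 2) (j + 1), ← hs']
      by_cases hc : j + 1 ≤ m - 2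
      · exact h4 (j + 1) (by omega) hc hf
      · exfalso
        have hm2 : m = 2 := by omega
        have hj0 : j = 0 := by omega
        subst hm2 hj0
        have hn4 : n = 4 := by norm_num [hn]
        have hs3 : s' = 3 := by omega
        subst hs3
        exact absurd hf (by decide)
    exact ⟨s' / 2, c1, by simpa using hs'.symm⟩
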